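/- Let k ≥ 2 and let p, q be integers. Then for every tuple (λ_{ij}) ∈ (ℂ*)^P and every (z_1,…,z_k) ∈ (ℂ*)^k one has ϑ( ((z_i·z_j^{−1}·λ_{ij})^p)_{(i,j)∈P}, ((z_i·z_j^{−1}·λ_{ij})^q)_{(i,j)∈P} ) = ϑ( (λ_{ij}^p)_{(i,j)∈P}, (λ_{ij}^q)_{(i,j)∈P} ). In other words, the function (λ_{ij}) ↦ ϑ(λ^p, λ^q) is invariant under the action (z_1,…,z_k)·(λ_{ij}) = (z_i z_j^{−1} λ_{ij}). -/
import Mathlib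


namespace ReducibleSpectral

noncomputable section

/-- The row index `(i, t)` (with `t : Fin (k-1)`) corresponds to the pair `(i, j) ∈ P`
(where `P = {(i,j) : i ≠ j}`), with `j` the `t`-th element of `{0,…,k-1} \ {i}`;
this identification is order-preserving for the lexicographic orders. -/
def colToRow (k : ℕ) (i : Fin k) (t : Fin (k - 1)) : Fin k :=
  if (t : ℕ) < (i : ℕ) then ⟨t, by have := t.isLt; omega⟩
  else ⟨(t : ℕ) + 1, by have := t.isLt; have := i.isLt; omega⟩

/-- The matrix `Ξ(λ,μ)`: rows indexed by `P = {(i,j) : i ≠ j}` (in lexicographic order,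
encoded via `colToRow`), columns indexed by pairs `(m,n)`, `m ∈ {1,…,k}`, `n ∈ {0,…,k-2}`
(lexicographic); the entry at row `(i,j)`, column `(m,n)` is `λ_{ij}·a_{ij}^n` if `m = i`,
`μ_{ij}·a_{ij}^n` if `m = j`, and `0` otherwise. -/
def Xi (k : ℕ) (a lam mu : Fin k → Fin k → ℂ) :
    Matrix (Fin k × Fin (k - 1)) (Fin k × Fin (k - 1)) ℂ :=
  fun p q =>
    if q.1 = p.1 then lam p.1 (colToRow k p.1 p.2) * a p.1 (colToRow k p.1 p.2) ^ (q.2 : ℕ)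
    else if q.1 = colToRow k p.1 p.2 then
      mu p.1 (colToRow k p.1 p.2) * a p.1 (colToRow k p.1 p.2) ^ (q.2 : ℕ)
    else 0

/-- The extended theta function `ϑ(λ,μ) = det Ξ(λ,μ)`. -/
def theta (k : ℕ) (a lam mu : Fin k → Fin k → ℂ) : ℂ := (Xi k a lam mu).det

/-- The index set `P = {(i,j) : i,j ∈ {1,…,k}, i ≠ j}` as a finset. -/
def Pfin (k : ℕ) : Finset (Fin k × Fin k) :=
  Finset.univ.filter fun p => p.1 ≠ p.2

/-- For `L ⊆ P`, the set `L_i = {(i,j) ∈ L} ∪ {(m,i) ∈ P : (m,i) ∉ L}`. -/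
def Lset (k : ℕ) (L : Finset (Fin k × Fin k)) (i : Fin k) : Finset (Fin k × Fin k) :=
  (L.filter fun p => p.1 = i) ∪ ((Pfin k \ L).filter fun p => p.2 = i)

/-- `L ⊆ P` is regular iff every `L_i` has cardinality `k - 1`. -/
def IsRegular (k : ℕ) (L : Finset (Fin k × Fin k)) : Prop :=
  ∀ i : Fin k, (Lset k L i).card = k - 1


lemma colToRow_ne (k : ℕ) (i : Fin k) (t : Fin (k - 1)) : colToRow k i t ≠ i := by
  unfold colToRow
  split <;> simp [Fin.ext_iff] <;> omega

lemma prod_colToRow (k : ℕ) (i : Fin k) (f : Fin k → ℂ) :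
    ∏ t : Fin (k - 1), f (colToRow k i t) = ∏ j ∈ Finset.univ.erase i, f j := by
  refine Finset.prod_nbij (fun t => colToRow k i t) ?_ ?_ ?_ ?_
  · intro t _
    simp [Finset.mem_coe, Finset.mem_erase, colToRow_ne]
  · intro t1 _ t2 _ h
    dsimp only at h
    unfold colToRow at h
    split_ifs at h <;> simp [Fin.ext_iff] at h ⊢ <;> omega
  · intro j hj
    simp only [Finset.coe_erase, Set.mem_diff, Set.mem_singleton_iff] at hj
    have hne : (j : ℕ) ≠ (i : ℕ) := fun h => hj.2 (Fin.ext h)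
    have hjk := j.isLt
    have hik := i.isLt
    refine ⟨⟨if (j : ℕ) < (i : ℕ) then (j : ℕ) else (j : ℕ) - 1, by split <;> omega⟩,
      by simp, ?_⟩
    dsimp only
    unfold colToRow
    by_cases h : (j : ℕ) < (i : ℕ)
    · simp only [if_pos h]
    · simp only [if_neg h]
      rw [if_neg (by omega)]
      simp [Fin.ext_iff]; omega
  · intro t _
    rfl


/-- for integers `p, q`, the function `(λ_{ij}) ↦ ϑ(λ^p, λ^q)` on `(ℂ*)^P`
is invariant under the action `(z_1,…,z_k)·(λ_{ij}) = (z_i z_j^{−1} λ_{ij})` of `(ℂ*)^k`. -/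
theorem theta_pq_invariant (k : ℕ) (hk : 2 ≤ k) (a : Fin k → Fin k → ℂ) (p q : ℤ)
    (lam : Fin k → Fin k → ℂ) (hlam : ∀ i j : Fin k, i ≠ j → lam i j ≠ 0)
    (z : Fin k → ℂ) (hz : ∀ i, z i ≠ 0) :
    theta k a (fun i j => (z i * (z j)⁻¹ * lam i j) ^ p)
        (fun i j => (z i * (z j)⁻¹ * lam i j) ^ q) =
      theta k a (fun i j => lam i j ^ p) (fun i j => lam i j ^ q) := by
  set r : Fin k × Fin (k - 1) → ℂ :=
    fun P => z P.1 ^ q * (z (colToRow k P.1 P.2) ^ p)⁻¹ with hr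
  set c : Fin k × Fin (k - 1) → ℂ := fun Q => z Q.1 ^ (p - q) with hc
  have hM : Xi k a (fun i j => (z i * (z j)⁻¹ * lam i j) ^ p)
      (fun i j => (z i * (z j)⁻¹ * lam i j) ^ q) =
      Matrix.of fun P Q => r P *
        (Matrix.of fun P Q => c Q *
          Xi k a (fun i j => lam i j ^ p) (fun i j => lam i j ^ q) P Q) P Q := by
    ext P Q
    simp only [Matrix.of_apply, Xi, hr, hc]
    set j := colToRow k P.1 P.2 with hj
    split_ifs with h1 h2
    · -- Q.1 = P.1
      rw [h1]
      have e1 : z P.1 ^ p = z P.1 ^ q * z P.1 ^ (p - q) := by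
        rw [← zpow_add₀ (hz P.1)]; ring_nf
      rw [mul_zpow, mul_zpow, inv_zpow, e1]
      ring
    · -- Q.1 = j
      rw [h2]
      have e2 : (z j ^ q)⁻¹ = (z j ^ p)⁻¹ * z j ^ (p - q) := by
        rw [eq_comm, inv_mul_eq_iff_eq_mul₀ (zpow_ne_zero _ (hz j)),
          zpow_sub₀ (hz j), div_eq_mul_inv]
      rw [mul_zpow, mul_zpow, inv_zpow, e2]
      ring
    · ring
  rw [theta, theta, hM, Matrix.det_mul_column, Matrix.det_mul_row]
  rw [← mul_assoc]
  convert one_mul _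
  -- ∏ r * ∏ c = 1
  have hprod_c : ∏ Q : Fin k × Fin (k - 1), c Q = ∏ m : Fin k, (z m ^ (p - q)) ^ (k - 1) := by
    rw [Fintype.prod_prod_type]
    simp [hc, Finset.prod_const]
  have hprod_r : ∏ P : Fin k × Fin (k - 1), r P =
      ∏ i : Fin k, ((z i ^ q) ^ (k - 1) * ((∏ m : Fin k, (z m ^ p)⁻¹) * z i ^ p)) := by
    rw [Fintype.prod_prod_type]
    refine Finset.prod_congr rfl fun i _ => ?_
    rw [hr]
    simp only
    rw [Finset.prod_mul_distrib, Finset.prod_const, Finset.card_univ, Fintype.card_fin]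
    congr 1
    rw [prod_colToRow k i (fun m => (z m ^ p)⁻¹)]
    have hfull : (∏ m : Fin k, (z m ^ p)⁻¹) =
        (∏ m ∈ Finset.univ.erase i, (z m ^ p)⁻¹) * (z i ^ p)⁻¹ :=
      (Finset.prod_erase_mul Finset.univ _ (Finset.mem_univ i)).symm
    rw [hfull, mul_assoc, inv_mul_cancel₀ (zpow_ne_zero _ (hz i)), mul_one]
  rw [hprod_c, hprod_r, ← Finset.prod_mul_distrib]
  have hone : ∀ i : Fin k, (z i ^ q) ^ (k - 1) * ((∏ m : Fin k, (z m ^ p)⁻¹) * z i ^ p) *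
      (z i ^ (p - q)) ^ (k - 1) =
      (∏ m : Fin k, (z m ^ p)⁻¹) * (z i ^ p) ^ k := by
    intro i
    have e3 : (z i ^ q) ^ (k - 1) * (z i ^ (p - q)) ^ (k - 1) = (z i ^ p) ^ (k - 1) := by
      rw [← mul_pow, ← zpow_add₀ (hz i)]
      ring_nf
    calc (z i ^ q) ^ (k - 1) * ((∏ m : Fin k, (z m ^ p)⁻¹) * z i ^ p) *
          (z i ^ (p - q)) ^ (k - 1)
        = (z i ^ q) ^ (k - 1) * (z i ^ (p - q)) ^ (k - 1) *
          ((∏ m : Fin k, (z m ^ p)⁻¹) * z i ^ p) := by ring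
      _ = (z i ^ p) ^ (k - 1) * ((∏ m : Fin k, (z m ^ p)⁻¹) * z i ^ p) := by rw [e3]
      _ = (∏ m : Fin k, (z m ^ p)⁻¹) * ((z i ^ p) ^ (k - 1) * z i ^ p) := by ring
      _ = (∏ m : Fin k, (z m ^ p)⁻¹) * (z i ^ p) ^ k := by
          rw [← pow_succ]
          congr 2
          omega
  calc ∏ i : Fin k, ((z i ^ q) ^ (k - 1) * ((∏ m : Fin k, (z m ^ p)⁻¹) * z i ^ p) *
          (z i ^ (p - q)) ^ (k - 1))
      = ∏ i : Fin k, ((∏ m : Fin k, (z m ^ p)⁻¹) * (z i ^ p) ^ k) :=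
        Finset.prod_congr rfl fun i _ => hone i
    _ = (∏ m : Fin k, (z m ^ p)⁻¹) ^ k * (∏ i : Fin k, z i ^ p) ^ k := by
        rw [Finset.prod_mul_distrib, Finset.prod_const, Finset.card_univ, Fintype.card_fin,
          Finset.prod_pow]
    _ = ((∏ m : Fin k, (z m ^ p)⁻¹) * ∏ i : Fin k, z i ^ p) ^ k := (mul_pow _ _ _).symm
    _ = 1 := by
        rw [← Finset.prod_mul_distrib,
          Finset.prod_eq_one fun i _ => inv_mul_cancel₀ (zpow_ne_zero _ (hz i)), one_pow]


end

end ReducibleSpectral
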